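/- Let (f_0, …, f_n) be a cocycle system of depth n and weight m, and let (h_0, …, h_{n'}) be a cocycle system of depth n' and weight m'. Define p_k := binom(n+n', k)^{−1} · Σ_{i+j=k, 0≤i≤n, 0≤j≤n'} binom(n,i)·binom(n',j)·f_i·h_j for 0 ≤ k ≤ n+n'. Then (p_0, …, p_{n+n'}) is a cocycle system of depth n+n' and weight m+m', and p_0 = f_0·h_0. (Hence the product of an M^n_m-function and an M^{n'}_{m'}-function is an M^{n+n'}_{m+m'}-function.) -/

import Mathlib

open Complex Finset

/-- A cocycle system of depth `n` and weight `m`: a tuple `(f 0, …, f n)` of holomorphic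
functions on the upper half plane satisfying the defining transformation rule under
`SL(2,ℤ)`. -/
def IsCocycleSystem (n : ℕ) (m : ℤ) (f : ℕ → ℂ → ℂ) : Prop :=
  (∀ i ≤ n, DifferentiableOn ℂ (f i) {z : ℂ | 0 < z.im}) ∧
  ∀ A : Matrix (Fin 2) (Fin 2) ℤ, A.det = 1 → ∀ i ≤ n, ∀ z : ℂ, 0 < z.im →
    f i (((A 0 0 : ℂ) * z + (A 0 1 : ℂ)) / ((A 1 0 : ℂ) * z + (A 1 1 : ℂ))) =
      ∑ j ∈ Finset.range (n - i + 1),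
        ((n - i).choose j : ℂ) * (A 1 0 : ℂ) ^ j *
          ((A 1 0 : ℂ) * z + (A 1 1 : ℂ)) ^ (m - 2 * (i : ℤ) - (j : ℤ)) * f (i + j) z

lemma denom_ne_zero' (A : Matrix (Fin 2) (Fin 2) ℤ) (hA : A.det = 1) (z : ℂ) (hz : 0 < z.im) :
    (A 1 0 : ℂ) * z + (A 1 1 : ℂ) ≠ 0 := by
  intro H
  have him := congrArg Complex.im H
  simp [Complex.add_im, Complex.mul_im] at him
  have hc : A 1 0 = 0 := by
    rcases him with h | h
    · exact_mod_cast h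
    · exact absurd h (ne_of_gt hz)
  rw [hc] at H
  simp at H
  have hdet := A.det_fin_two
  rw [hA, hc, H] at hdet
  simp at hdet

lemma stepA (n : ℕ) (m : ℤ) (f : ℕ → ℂ → ℂ) (hf : IsCocycleSystem n m f)
    (A : Matrix (Fin 2) (Fin 2) ℤ) (hA : A.det = 1) (z : ℂ) (hz : 0 < z.im) (i : ℕ) :
    (n.choose i : ℂ) * f i (((A 0 0 : ℂ) * z + (A 0 1 : ℂ)) / ((A 1 0 : ℂ) * z + (A 1 1 : ℂ))) =
      ∑ s ∈ range (n + 1), if i ≤ s then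
        (n.choose s : ℂ) * (s.choose i : ℂ) * (A 1 0 : ℂ) ^ (s - i) *
          ((A 1 0 : ℂ) * z + (A 1 1 : ℂ)) ^ (m - (i : ℤ) - (s : ℤ)) * f s z else 0 := by
  by_cases hi : i ≤ n
  · rw [hf.2 A hA i hi z hz, Finset.mul_sum]
    have hset : ∑ s ∈ range (n + 1), (if i ≤ s then
        (n.choose s : ℂ) * (s.choose i : ℂ) * (A 1 0 : ℂ) ^ (s - i) *
          ((A 1 0 : ℂ) * z + (A 1 1 : ℂ)) ^ (m - (i : ℤ) - (s : ℤ)) * f s z else 0) =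
        ∑ s ∈ Ico i (n + 1), (n.choose s : ℂ) * (s.choose i : ℂ) * (A 1 0 : ℂ) ^ (s - i) *
          ((A 1 0 : ℂ) * z + (A 1 1 : ℂ)) ^ (m - (i : ℤ) - (s : ℤ)) * f s z := by
      rw [← Finset.sum_filter]
      congr 1
      ext s
      simp [Nat.lt_succ_iff]
      omega
    rw [hset, Finset.sum_Ico_eq_sum_range]
    have hrange : n + 1 - i = n - i + 1 := by omega
    rw [hrange]
    refine Finset.sum_congr rfl fun j hj => ?_
    simp only [Finset.mem_range, Nat.lt_succ_iff] at hj
    have hij : i + j ≤ n := by omega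
    have hchoose : (n.choose (i + j) : ℂ) * ((i + j).choose i : ℂ) =
        (n.choose i : ℂ) * ((n - i).choose j : ℂ) := by
      have := Nat.choose_mul (n := n) (Nat.le_add_right i j)
      rw [Nat.add_sub_cancel_left] at this
      exact_mod_cast this
    have hexp : m - (i : ℤ) - ((i + j : ℕ) : ℤ) = m - 2 * (i : ℤ) - (j : ℤ) := by
      push_cast; ring
    rw [Nat.add_sub_cancel_left, hexp]
    rw [show (n.choose (i + j) : ℂ) * ((i + j).choose i : ℂ) * (A 1 0 : ℂ) ^ j *
        ((A 1 0 : ℂ) * z + (A 1 1 : ℂ)) ^ (m - 2 * (i : ℤ) - (j : ℤ)) * f (i + j) z =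
        ((n.choose (i + j) : ℂ) * ((i + j).choose i : ℂ)) * ((A 1 0 : ℂ) ^ j *
        ((A 1 0 : ℂ) * z + (A 1 1 : ℂ)) ^ (m - 2 * (i : ℤ) - (j : ℤ)) * f (i + j) z) by ring,
      hchoose]
    ring
  · rw [Nat.choose_eq_zero_of_lt (by omega), Nat.cast_zero, zero_mul]
    refine (Finset.sum_eq_zero fun s hs => ?_).symm
    rw [if_neg]
    simp only [Finset.mem_range, Nat.lt_succ_iff] at hs
    omega

lemma sumP (n n' K : ℕ) (F H : ℕ → ℂ) :
    ∑ u ∈ range (K + 1), (n.choose u : ℂ) * (n'.choose (K - u) : ℂ) * F u * H (K - u) =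
    ∑ s ∈ range (n + 1), ∑ t ∈ range (n' + 1),
      if s + t = K then (n.choose s : ℂ) * (n'.choose t : ℂ) * F s * H t else 0 := by
  have hR : ∀ s, ∑ t ∈ range (n' + 1),
      (if s + t = K then (n.choose s : ℂ) * (n'.choose t : ℂ) * F s * H t else 0) =
      if s ≤ K ∧ K - s ≤ n' then
        (n.choose s : ℂ) * (n'.choose (K - s) : ℂ) * F s * H (K - s) else 0 := by
    intro s
    by_cases hs : s ≤ K
    · have : ∀ t, (if s + t = K then (n.choose s : ℂ) * (n'.choose t : ℂ) * F s * H t else 0)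
          = (if t = K - s then (n.choose s : ℂ) * (n'.choose t : ℂ) * F s * H t else 0) :=
        fun t => if_congr (by omega) rfl rfl
      rw [Finset.sum_congr rfl fun t _ => this t,
        Finset.sum_ite_eq' (range (n' + 1)) (K - s)]
      simp only [Finset.mem_range, Nat.lt_succ_iff]
      by_cases h2 : K - s ≤ n' <;> simp [h2, hs]
    · rw [if_neg (by omega)]
      exact Finset.sum_eq_zero fun t _ => if_neg (by omega)
  rw [Finset.sum_congr rfl fun s _ => hR s, ← Finset.sum_filter]
  rw [← Finset.sum_filter_of_ne (s := range (K + 1))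
      (p := fun u => u ≤ n ∧ K - u ≤ n')
      (f := fun u => (n.choose u : ℂ) * (n'.choose (K - u) : ℂ) * F u * H (K - u)) ?_]
  · apply Finset.sum_congr
    · ext u
      simp only [Finset.mem_filter, Finset.mem_range, Nat.lt_succ_iff]
      omega
    · intros; rfl
  · intro u _ hne
    by_contra hc
    push_neg at hc
    rcases le_or_gt u n with hu | hu
    · exact hne (by rw [Nat.choose_eq_zero_of_lt (by omega : n' < K - u)]; simp)
    · exact hne (by rw [Nat.choose_eq_zero_of_lt hu]; simp)

lemma vandermonde' (s t k : ℕ) :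
    (((s + t).choose k : ℂ)) = ∑ i ∈ range (k + 1), (s.choose i : ℂ) * (t.choose (k - i) : ℂ) := by
  rw [Nat.add_choose_eq, Finset.Nat.sum_antidiagonal_eq_sum_range_succ_mk]
  push_cast
  rfl

/-- the (suitably binomially weighted) product of a cocycle system of depth `n`
and weight `m` with one of depth `n'` and weight `m'` is a cocycle system of depth `n+n'`
and weight `m+m'`, whose zeroth member is the product of the zeroth members. -/
theorem cocycleSystem_mul (n n' : ℕ) (m m' : ℤ) (f h : ℕ → ℂ → ℂ)
    (hf : IsCocycleSystem n m f) (hh : IsCocycleSystem n' m' h) :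
    IsCocycleSystem (n + n') (m + m')
      (fun k z => (((n + n').choose k : ℂ))⁻¹ *
        ∑ i ∈ Finset.range (k + 1),
          (n.choose i : ℂ) * (n'.choose (k - i) : ℂ) * f i z * h (k - i) z) ∧
    ∀ z : ℂ, ((((n + n').choose 0 : ℂ))⁻¹ *
        ∑ i ∈ Finset.range (0 + 1),
          (n.choose i : ℂ) * (n'.choose (0 - i) : ℂ) * f i z * h (0 - i) z) =
      f 0 z * h 0 z := by
  constructor
  · constructor
    · -- differentiability
      intro k _
      apply DifferentiableOn.const_mul
      apply DifferentiableOn.fun_sum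
      intro i _
      by_cases hi1 : i ≤ n
      · by_cases hi2 : k - i ≤ n'
        · have d1 := hf.1 i hi1
          have d2 := hh.1 (k - i) hi2
          exact (((differentiableOn_const _).mul (differentiableOn_const _)).mul d1).mul d2
        · rw [show ((n'.choose (k - i) : ℂ)) = 0 by
            rw [Nat.choose_eq_zero_of_lt (by omega)]; simp]
          simp only [mul_zero, zero_mul]
          exact differentiableOn_const 0
      · rw [show ((n.choose i : ℂ)) = 0 by
          rw [Nat.choose_eq_zero_of_lt (by omega)]; simp]
        simp only [mul_zero, zero_mul]
        exact differentiableOn_const 0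
    · -- transformation law
      intro A hA k hk z hz
      simp only []
      set c : ℂ := (A 1 0 : ℂ) with hc
      set w : ℂ := (A 1 0 : ℂ) * z + (A 1 1 : ℂ) with hw
      have hwne : w ≠ 0 := denom_ne_zero' A hA z hz
      set N := n + n' with hN
      set M := m + m' with hM
      clear_value c w
      have hNk : (N.choose k : ℂ) ≠ 0 := by
        exact_mod_cast (Nat.choose_pos hk).ne'
      -- canonical term
      set T : ℕ → ℕ → ℂ := fun s t => (N.choose k : ℂ)⁻¹ * (((s + t).choose k : ℂ) *
        ((n.choose s : ℂ) * (n'.choose t : ℂ) * c ^ (s + t - k) *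
          w ^ (M - (k : ℤ) - (s : ℤ) - (t : ℤ)) * f s z * h t z)) with hT
      have LHSeq : (N.choose k : ℂ)⁻¹ * ∑ i ∈ range (k + 1),
          (n.choose i : ℂ) * (n'.choose (k - i) : ℂ) *
            f i (((A 0 0 : ℂ) * z + (A 0 1 : ℂ)) / w) *
            h (k - i) (((A 0 0 : ℂ) * z + (A 0 1 : ℂ)) / w) =
          ∑ s ∈ range (n + 1), ∑ t ∈ range (n' + 1), T s t := by
        have key : ∀ i ∈ range (k + 1),
            (n.choose i : ℂ) * (n'.choose (k - i) : ℂ) *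
              f i (((A 0 0 : ℂ) * z + (A 0 1 : ℂ)) / w) *
              h (k - i) (((A 0 0 : ℂ) * z + (A 0 1 : ℂ)) / w) =
            ∑ s ∈ range (n + 1), ∑ t ∈ range (n' + 1),
              (if i ≤ s then (n.choose s : ℂ) * (s.choose i : ℂ) * c ^ (s - i) *
                  w ^ (m - (i : ℤ) - (s : ℤ)) * f s z else 0) *
              (if k - i ≤ t then (n'.choose t : ℂ) * (t.choose (k - i) : ℂ) * c ^ (t - (k - i)) *
                  w ^ (m' - ((k - i : ℕ) : ℤ) - (t : ℤ)) * h t z else 0) := by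
          intro i _
          rw [show (n.choose i : ℂ) * (n'.choose (k - i) : ℂ) *
              f i (((A 0 0 : ℂ) * z + (A 0 1 : ℂ)) / w) *
              h (k - i) (((A 0 0 : ℂ) * z + (A 0 1 : ℂ)) / w) =
              ((n.choose i : ℂ) *
              f i (((A 0 0 : ℂ) * z + (A 0 1 : ℂ)) / w)) *
              ((n'.choose (k - i) : ℂ) *
              h (k - i) (((A 0 0 : ℂ) * z + (A 0 1 : ℂ)) / w))
            from by ring]
          rw [hw, hc]
          rw [stepA n m f hf A hA z hz i, stepA n' m' h hh A hA z hz (k - i)]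
          rw [Finset.sum_mul_sum]
        rw [Finset.sum_congr rfl key, Finset.sum_comm]
        rw [Finset.sum_congr rfl fun s (_ : s ∈ range (n+1)) => Finset.sum_comm (s := range (k+1)) (t := range (n'+1))]
        have inner : ∀ s ∈ range (n + 1), ∀ t ∈ range (n' + 1),
            ∑ i ∈ range (k + 1),
              (if i ≤ s then (n.choose s : ℂ) * (s.choose i : ℂ) * c ^ (s - i) *
                  w ^ (m - (i : ℤ) - (s : ℤ)) * f s z else 0) *
              (if k - i ≤ t then (n'.choose t : ℂ) * (t.choose (k - i) : ℂ) * c ^ (t - (k - i)) *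
                  w ^ (m' - ((k - i : ℕ) : ℤ) - (t : ℤ)) * h t z else 0) =
            ((s + t).choose k : ℂ) *
              ((n.choose s : ℂ) * (n'.choose t : ℂ) * c ^ (s + t - k) *
                w ^ (M - (k : ℤ) - (s : ℤ) - (t : ℤ)) * f s z * h t z) := by
          intro s _ t _
          have term : ∀ i ∈ range (k + 1),
              (if i ≤ s then (n.choose s : ℂ) * (s.choose i : ℂ) * c ^ (s - i) *
                  w ^ (m - (i : ℤ) - (s : ℤ)) * f s z else 0) *
              (if k - i ≤ t then (n'.choose t : ℂ) * (t.choose (k - i) : ℂ) * c ^ (t - (k - i)) *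
                  w ^ (m' - ((k - i : ℕ) : ℤ) - (t : ℤ)) * h t z else 0) =
              ((s.choose i : ℂ) * (t.choose (k - i) : ℂ)) *
              ((n.choose s : ℂ) * (n'.choose t : ℂ) * c ^ (s + t - k) *
                w ^ (M - (k : ℤ) - (s : ℤ) - (t : ℤ)) * f s z * h t z) := by
            intro i hi
            simp only [Finset.mem_range, Nat.lt_succ_iff] at hi
            by_cases h1 : i ≤ s
            · by_cases h2 : k - i ≤ t
              · rw [if_pos h1, if_pos h2]
                have hpow : c ^ (s - i) * c ^ (t - (k - i)) = c ^ (s + t - k) := by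
                  rw [← pow_add]
                  congr 1
                  omega
                have hzpow : w ^ (m - (i : ℤ) - (s : ℤ)) *
                    w ^ (m' - ((k - i : ℕ) : ℤ) - (t : ℤ)) =
                    w ^ (M - (k : ℤ) - (s : ℤ) - (t : ℤ)) := by
                  rw [← zpow_add₀ hwne]
                  congr 1
                  have : ((k - i : ℕ) : ℤ) = (k : ℤ) - (i : ℤ) := by
                    push_cast [Nat.cast_sub hi]; ring
                  rw [this, hM]
                  ring
                calc (n.choose s : ℂ) * (s.choose i : ℂ) * c ^ (s - i) *
                      w ^ (m - (i : ℤ) - (s : ℤ)) * f s z *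
                    ((n'.choose t : ℂ) * (t.choose (k - i) : ℂ) * c ^ (t - (k - i)) *
                      w ^ (m' - ((k - i : ℕ) : ℤ) - (t : ℤ)) * h t z)
                    = ((s.choose i : ℂ) * (t.choose (k - i) : ℂ)) *
                      ((n.choose s : ℂ) * (n'.choose t : ℂ) *
                        (c ^ (s - i) * c ^ (t - (k - i))) *
                        (w ^ (m - (i : ℤ) - (s : ℤ)) *
                          w ^ (m' - ((k - i : ℕ) : ℤ) - (t : ℤ))) * f s z * h t z) := by ring
                  _ = _ := by rw [hpow, hzpow]
              · rw [if_neg h2, mul_zero,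
                  show ((t.choose (k - i) : ℂ)) = 0 by
                    rw [Nat.choose_eq_zero_of_lt (by omega)]; simp]
                ring
            · rw [if_neg h1, zero_mul,
                show ((s.choose i : ℂ)) = 0 by
                  rw [Nat.choose_eq_zero_of_lt (by omega)]; simp]
              ring
          rw [Finset.sum_congr rfl term, ← Finset.sum_mul, ← vandermonde']
        rw [Finset.sum_congr rfl fun s hs =>
          Finset.sum_congr rfl fun t ht => inner s hs t ht]
        rw [Finset.mul_sum]
        refine Finset.sum_congr rfl fun s _ => ?_
        rw [Finset.mul_sum]
      have RHSeq : (∑ j ∈ range (N - k + 1),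
          ((N - k).choose j : ℂ) * c ^ j * w ^ (M - 2 * (k : ℤ) - (j : ℤ)) *
            ((N.choose (k + j) : ℂ)⁻¹ * ∑ u ∈ range (k + j + 1),
              (n.choose u : ℂ) * (n'.choose (k + j - u) : ℂ) * f u z * h (k + j - u) z)) =
          ∑ s ∈ range (n + 1), ∑ t ∈ range (n' + 1), T s t := by
        have step1 : ∀ l ∈ range (N - k + 1),
            ((N - k).choose l : ℂ) * c ^ l * w ^ (M - 2 * (k : ℤ) - (l : ℤ)) *
              ((N.choose (k + l) : ℂ)⁻¹ * ∑ u ∈ range (k + l + 1),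
                (n.choose u : ℂ) * (n'.choose (k + l - u) : ℂ) * f u z * h (k + l - u) z) =
            ∑ s ∈ range (n + 1), ∑ t ∈ range (n' + 1),
              (if s + t = k + l then
                ((N - k).choose l : ℂ) * c ^ l * w ^ (M - 2 * (k : ℤ) - (l : ℤ)) *
                  (N.choose (k + l) : ℂ)⁻¹ *
                  ((n.choose s : ℂ) * (n'.choose t : ℂ) * f s z * h t z) else 0) := by
          intro l _
          rw [sumP n n' (k + l) (fun s => f s z) (fun t => h t z)]
          rw [Finset.mul_sum, Finset.mul_sum]
          refine Finset.sum_congr rfl fun s _ => ?_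
          rw [Finset.mul_sum, Finset.mul_sum]
          refine Finset.sum_congr rfl fun t _ => ?_
          by_cases hst : s + t = k + l
          · rw [if_pos hst, if_pos hst]; ring
          · rw [if_neg hst, if_neg hst]; simp
        rw [Finset.sum_congr rfl step1, Finset.sum_comm]
        refine Finset.sum_congr rfl fun s hs => ?_
        rw [Finset.sum_comm]
        refine Finset.sum_congr rfl fun t ht => ?_
        simp only [Finset.mem_range, Nat.lt_succ_iff] at hs ht
        by_cases hkst : k ≤ s + t
        · have hmem : s + t - k ∈ range (N - k + 1) := by
            simp only [Finset.mem_range, Nat.lt_succ_iff]; omega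
          have cond : ∀ l, (s + t = k + l) ↔ (l = s + t - k) := fun l => by omega
          rw [Finset.sum_congr rfl fun l _ => if_congr (cond l) rfl rfl,
            Finset.sum_ite_eq' (range (N - k + 1)) (s + t - k), if_pos hmem]
          have hkl : k + (s + t - k) = s + t := by omega
          rw [hkl]
          have hstN : s + t ≤ N := by omega
          have hNst : (N.choose (s + t) : ℂ) ≠ 0 := by
            exact_mod_cast (Nat.choose_pos hstN).ne'
          have hcm : (N.choose (s + t) : ℂ) * ((s + t).choose k : ℂ) =
              (N.choose k : ℂ) * ((N - k).choose (s + t - k) : ℂ) := by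
            exact_mod_cast Nat.choose_mul (n := N) hkst
          have hzexp : M - 2 * (k : ℤ) - ((s + t - k : ℕ) : ℤ) =
              M - (k : ℤ) - (s : ℤ) - (t : ℤ) := by
            have : ((s + t - k : ℕ) : ℤ) = (s : ℤ) + (t : ℤ) - (k : ℤ) := by
              push_cast [Nat.cast_sub hkst]; ring
            rw [this]; ring
          rw [hzexp]
          have hco : ((N - k).choose (s + t - k) : ℂ) * ((N.choose (s + t) : ℂ))⁻¹ =
              ((N.choose k : ℂ))⁻¹ * (((s + t).choose k : ℂ)) := by
            rw [← div_eq_mul_inv, inv_mul_eq_div, div_eq_div_iff hNst hNk]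
            linear_combination -hcm
          calc ((N - k).choose (s + t - k) : ℂ) * c ^ (s + t - k) *
                w ^ (M - (k : ℤ) - (s : ℤ) - (t : ℤ)) * ((N.choose (s + t) : ℂ))⁻¹ *
                ((n.choose s : ℂ) * (n'.choose t : ℂ) * f s z * h t z)
              = (((N - k).choose (s + t - k) : ℂ) * ((N.choose (s + t) : ℂ))⁻¹) *
                (c ^ (s + t - k) * w ^ (M - (k : ℤ) - (s : ℤ) - (t : ℤ)) *
                ((n.choose s : ℂ) * (n'.choose t : ℂ) * f s z * h t z)) := by ring
            _ = (((N.choose k : ℂ))⁻¹ * (((s + t).choose k : ℂ))) *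
                (c ^ (s + t - k) * w ^ (M - (k : ℤ) - (s : ℤ) - (t : ℤ)) *
                ((n.choose s : ℂ) * (n'.choose t : ℂ) * f s z * h t z)) := by rw [hco]
            _ = T s t := by simp only [hT]; ring
        · rw [Finset.sum_eq_zero fun l _ => if_neg (by omega)]
          rw [hT]
          simp only []
          rw [show (((s + t).choose k : ℂ)) = 0 by
            rw [Nat.choose_eq_zero_of_lt (by omega)]; simp]
          simp
      rw [LHSeq, ← RHSeq]
  · intro z
    simp
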